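/- Let n ≥ 1, let σ : ℝⁿ → ℝⁿ be any function, let g be the convex hull of (p, β) ↦ |σ(p) − β|², and for p ∈ ℝⁿ set Σ(p) = Γ(p) ∩ Z(p). Then for every p ∈ ℝⁿ, Σ(p) is a closed convex subset of ℝⁿ containing σ(p); moreover, if σ is continuous and p lies in the interior Λ° of Λ, then Σ(p) = {σ(p)}. -/

import Mathlib

open scoped RealInnerProductSpace

/-- With `Λ`, `Γ`, `Z` as in the paper and `Σ(p) = Γ(p) ∩ Z(p)`:
for every `p`, `Σ(p)` is a closed convex subset of `ℝⁿ` containing `σ(p)`;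
moreover, if `σ` is continuous and `p ∈ interior Λ`, then `Σ(p) = {σ(p)}`. -/
theorem stmt3 (n : ℕ) (hn : 1 ≤ n)
    (σ : EuclideanSpace ℝ (Fin n) → EuclideanSpace ℝ (Fin n))
    (g : EuclideanSpace ℝ (Fin n) × EuclideanSpace ℝ (Fin n) → ℝ)
    (hg_conv : ConvexOn ℝ Set.univ g)
    (hg_le : ∀ a b, g (a, b) ≤ ‖σ a - b‖ ^ 2)
    (hg_max : ∀ h : EuclideanSpace ℝ (Fin n) × EuclideanSpace ℝ (Fin n) → ℝ,
      ConvexOn ℝ Set.univ h → (∀ a b, h (a, b) ≤ ‖σ a - b‖ ^ 2) →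
      ∀ a b, h (a, b) ≤ g (a, b))
    (Λ : Set (EuclideanSpace ℝ (Fin n)))
    (hΛ : Λ = {p | ∀ q, 0 ≤ ⟪σ q - σ p, q - p⟫})
    (Γ Z Sig : EuclideanSpace ℝ (Fin n) → Set (EuclideanSpace ℝ (Fin n)))
    (hΓ : ∀ p, Γ p = {β | ∀ q ∈ Λ, 0 ≤ ⟪β - σ q, p - q⟫})
    (hZ : ∀ p, Z p = {β | g (p, β) = 0})
    (hSig : ∀ p, Sig p = Γ p ∩ Z p)
    (p : EuclideanSpace ℝ (Fin n)) :
    IsClosed (Sig p) ∧ Convex ℝ (Sig p) ∧ σ p ∈ Sig p ∧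
      (Continuous σ → p ∈ interior Λ → Sig p = {σ p}) := by
  -- g is nonnegative
  have hg0 : ∀ a b, 0 ≤ g (a, b) := by
    intro a b
    exact hg_max (fun _ => 0) (convexOn_const 0 convex_univ)
      (fun a b => sq_nonneg _) a b
  -- g is continuous
  have hgc : Continuous g := by
    have := hg_conv.continuousOn isOpen_univ
    rw [← continuousOn_univ]
    exact this
  -- Γ p is closed
  have hΓclosed : IsClosed (Γ p) := by
    rw [hΓ]
    have : {β : EuclideanSpace ℝ (Fin n) | ∀ q ∈ Λ, 0 ≤ ⟪β - σ q, p - q⟫}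
        = ⋂ q ∈ Λ, {β | 0 ≤ ⟪β - σ q, p - q⟫} := by
      ext β; simp [Set.mem_iInter]
    rw [this]
    refine isClosed_biInter fun q hq => isClosed_le continuous_const ?_
    exact (continuous_id.sub continuous_const).inner continuous_const
  -- Z p is closed
  have hZclosed : IsClosed (Z p) := by
    rw [hZ]
    exact isClosed_eq (hgc.comp (continuous_const.prodMk continuous_id)) continuous_const
  -- Γ p is convex
  have hΓconv : Convex ℝ (Γ p) := by
    rw [hΓ]
    intro β₁ h₁ β₂ h₂ a b ha hb hab
    intro q hq
    have e : a • β₁ + b • β₂ - σ q = a • (β₁ - σ q) + b • (β₂ - σ q) := by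
      match_scalars <;> linarith
    rw [e, inner_add_left, real_inner_smul_left, real_inner_smul_left]
    have := h₁ q hq
    have := h₂ q hq
    positivity
  -- Z p is convex
  have hZconv : Convex ℝ (Z p) := by
    rw [hZ]
    intro β₁ h₁ β₂ h₂ a b ha hb hab
    simp only [Set.mem_setOf_eq] at h₁ h₂ ⊢
    have key := hg_conv.2 (Set.mem_univ (p, β₁)) (Set.mem_univ (p, β₂)) ha hb hab
    have e : a • ((p : EuclideanSpace ℝ (Fin n)), β₁) + b • (p, β₂)
        = (p, a • β₁ + b • β₂) := by
      rw [Prod.smul_mk, Prod.smul_mk, Prod.mk_add_mk]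
      congr 1
      rw [← add_smul, hab, one_smul]
    rw [e, h₁, h₂] at key
    simp only [smul_eq_mul, mul_zero, add_zero] at key
    exact le_antisymm key (hg0 _ _)
  -- σ p ∈ Sig p
  have hσmem : σ p ∈ Sig p := by
    rw [hSig]
    constructor
    · rw [hΓ]
      intro q hq
      rw [hΛ] at hq
      exact hq p
    · rw [hZ]
      refine le_antisymm ?_ (hg0 _ _)
      have := hg_le p (σ p)
      simpa using this
  refine ⟨?_, ?_, hσmem, ?_⟩
  · rw [hSig]; exact hΓclosed.inter hZclosed
  · rw [hSig]; exact hΓconv.inter hZconv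
  · intro hσc hpint
    ext β
    simp only [Set.mem_singleton_iff]
    constructor
    · intro hβ
      have hβΓ : β ∈ Γ p := ((hSig p ▸ hβ) : β ∈ Γ p ∩ Z p).1
      rw [hΓ] at hβΓ
      have key : ∀ v : EuclideanSpace ℝ (Fin n), ⟪β - σ p, v⟫ ≤ 0 := by
        intro v
        obtain ⟨ε, hε, hball⟩ := Metric.isOpen_iff.1 isOpen_interior p hpint
        set δ : ℝ := ε / (‖v‖ + 1) with hδdef
        have hδ : 0 < δ := by positivity
        have hcont : Continuous (fun t : ℝ => ⟪β - σ (p + t • v), v⟫) := by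
          exact (continuous_const.sub (hσc.comp
            (continuous_const.add (continuous_id.smul continuous_const)))).inner
            continuous_const
        have hev : ∀ᶠ t in nhdsWithin (0:ℝ) (Set.Ioi 0),
            ⟪β - σ (p + t • v), v⟫ ≤ 0 := by
          have hmem : Set.Ioo (0:ℝ) δ ∈ nhdsWithin (0:ℝ) (Set.Ioi 0) :=
            Ioo_mem_nhdsGT_of_mem ⟨le_refl 0, hδ⟩
          filter_upwards [hmem] with t ht
          have hq : p + t • v ∈ Λ := by
            apply interior_subset
            apply hball
            rw [Metric.mem_ball, dist_eq_norm, add_sub_cancel_left, norm_smul,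
              Real.norm_eq_abs, abs_of_pos ht.1]
            have h1 : t * ‖v‖ ≤ t * (‖v‖ + 1) := by
              nlinarith [ht.1.le]
            have h2 : t * (‖v‖ + 1) < δ * (‖v‖ + 1) := by
              have : (0:ℝ) < ‖v‖ + 1 := by positivity
              exact mul_lt_mul_of_pos_right ht.2 this
            have h3 : δ * (‖v‖ + 1) = ε := by
              rw [hδdef]
              field_simp
            linarith
          have h0 := hβΓ (p + t • v) hq
          have h2 : p - (p + t • v) = (-t) • v := by
            rw [neg_smul]; abel
          rw [h2, real_inner_smul_right] at h0
          nlinarith [ht.1]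
        have hlim : Filter.Tendsto (fun t : ℝ => ⟪β - σ (p + t • v), v⟫)
            (nhdsWithin (0:ℝ) (Set.Ioi 0)) (nhds ⟪β - σ (p + (0:ℝ) • v), v⟫) :=
          (hcont.tendsto 0).mono_left nhdsWithin_le_nhds
        have := le_of_tendsto hlim hev
        simpa using this
      have := key (β - σ p)
      have hsub : β - σ p = 0 := real_inner_self_nonpos.1 this
      exact sub_eq_zero.1 hsub
    · intro hβ
      rw [hβ]
      exact hσmem
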